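/- (The limit of the monotone value iterates is a fixed point of the Bellman operator.) Let V0 : S → ℝ satisfy 0 ≤ V0 s ≤ 1 and V0 s ≤ (T V0) s for all s ∈ S. Then the iterates T^k V0 converge pointwise to some V* : S → ℝ with 0 ≤ V* s ≤ 1 for all s, and V* satisfies the fixed-point equation T V* = V*. -/

import Mathlib

open Finset

/-- The set of mixed strategies over a finite type `X`. -/
def Mixed (X : Type*) [Fintype X] : Set (X → ℝ) :=
  {p | (∀ x, 0 ≤ p x) ∧ ∑ x, p x = 1}

/-- The max–min Bellman operator: the defender maximizes and the adversary
minimizes over mixed strategies. -/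
noncomputable def bellmanT {S D A : Type*} [Fintype S] [Fintype D] [Fintype A]
    (P : D → A → S → S → ℝ) (V : S → ℝ) : S → ℝ := fun s =>
  ⨆ μ : ↥(Mixed D), ⨅ ν : ↥(Mixed A),
    ∑ d, ∑ a, ∑ s', (μ : D → ℝ) d * (ν : A → ℝ) a * P d a s s' * V s'

/-- The Bellman backup operator for a fixed stationary defender policy `π`,
with the adversary best-responding (minimizing) over mixed strategies. -/
noncomputable def bellmanPol {S D A : Type*} [Fintype S] [Fintype D] [Fintype A]
    (P : D → A → S → S → ℝ) (π : S → D → ℝ) (V : S → ℝ) : S → ℝ := fun s =>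
  ⨅ ν : ↥(Mixed A),
    ∑ d, ∑ a, ∑ s', π s d * (ν : A → ℝ) a * P d a s s' * V s'
set_option linter.unusedSectionVars false
namespace BellmanAux

noncomputable def unif (X : Type*) [Fintype X] [Nonempty X] : ↥(Mixed X) :=
  ⟨fun _ => (Fintype.card X : ℝ)⁻¹, fun _ => by positivity, by
    have : (Fintype.card X : ℝ) ≠ 0 := by exact_mod_cast Fintype.card_ne_zero
    simp only [Finset.sum_const, Finset.card_univ, nsmul_eq_mul]
    field_simp⟩

instance (X : Type*) [Fintype X] [Nonempty X] : Nonempty ↥(Mixed X) := ⟨unif X⟩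

variable {S D A : Type*} [Fintype S] [Nonempty S] [Fintype D] [Nonempty D] [Fintype A] [Nonempty A]
variable (P : D → A → S → S → ℝ)

noncomputable def payoff (V : S → ℝ) (s : S) (μ : ↥(Mixed D)) (ν : ↥(Mixed A)) : ℝ :=
  ∑ d, ∑ a, ∑ s', (μ : D → ℝ) d * (ν : A → ℝ) a * P d a s s' * V s'

lemma bellmanT_eq (V : S → ℝ) (s : S) :
    bellmanT P V s = ⨆ μ : ↥(Mixed D), ⨅ ν : ↥(Mixed A), payoff P V s μ ν := rfl

variable (hP0 : ∀ d a s s', 0 ≤ P d a s s') (hP1 : ∀ d a s, ∑ s', P d a s s' = 1)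

include hP1 in
lemma weight_sum (s : S) (μ : ↥(Mixed D)) (ν : ↥(Mixed A)) :
    ∑ d, ∑ a, ∑ s', (μ : D → ℝ) d * (ν : A → ℝ) a * P d a s s' = 1 := by
  have h1 : ∀ d a, ∑ s', (μ : D → ℝ) d * (ν : A → ℝ) a * P d a s s'
      = (μ : D → ℝ) d * (ν : A → ℝ) a := by
    intro d a; rw [← Finset.mul_sum, hP1, mul_one]
  calc ∑ d, ∑ a, ∑ s', (μ : D → ℝ) d * (ν : A → ℝ) a * P d a s s'
      = ∑ d, ∑ a, (μ : D → ℝ) d * (ν : A → ℝ) a := by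
        refine Finset.sum_congr rfl fun d _ => Finset.sum_congr rfl fun a _ => h1 d a
    _ = ∑ d, (μ : D → ℝ) d := by
        refine Finset.sum_congr rfl fun d _ => ?_
        rw [← Finset.mul_sum, ν.2.2, mul_one]
    _ = 1 := μ.2.2

include hP0 in
lemma payoff_mono {V W : S → ℝ} (h : ∀ s', V s' ≤ W s') (s : S) (μ : ↥(Mixed D))
    (ν : ↥(Mixed A)) : payoff P V s μ ν ≤ payoff P W s μ ν := by
  refine Finset.sum_le_sum fun d _ => Finset.sum_le_sum fun a _ =>
    Finset.sum_le_sum fun s' _ => ?_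
  have hc : 0 ≤ (μ : D → ℝ) d * (ν : A → ℝ) a * P d a s s' :=
    mul_nonneg (mul_nonneg (μ.2.1 d) (ν.2.1 a)) (hP0 d a s s')
  exact mul_le_mul_of_nonneg_left (h s') hc

include hP0 hP1 in
lemma payoff_le {V : S → ℝ} {M : ℝ} (h : ∀ s', V s' ≤ M) (s : S) (μ : ↥(Mixed D))
    (ν : ↥(Mixed A)) : payoff P V s μ ν ≤ M := by
  have := payoff_mono P hP0 (V := V) (W := fun _ => M) h s μ ν
  refine this.trans_eq ?_
  unfold payoff
  calc ∑ d, ∑ a, ∑ s', (μ : D → ℝ) d * (ν : A → ℝ) a * P d a s s' * M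
      = (∑ d, ∑ a, ∑ s', (μ : D → ℝ) d * (ν : A → ℝ) a * P d a s s') * M := by
        simp [Finset.sum_mul]
    _ = M := by rw [weight_sum P hP1, one_mul]

include hP0 hP1 in
lemma le_payoff {V : S → ℝ} {m : ℝ} (h : ∀ s', m ≤ V s') (s : S) (μ : ↥(Mixed D))
    (ν : ↥(Mixed A)) : m ≤ payoff P V s μ ν := by
  have := payoff_mono P hP0 (V := fun _ => m) (W := V) h s μ ν
  refine le_trans (le_of_eq ?_) this
  unfold payoff
  calc m = (∑ d, ∑ a, ∑ s', (μ : D → ℝ) d * (ν : A → ℝ) a * P d a s s') * m := by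
        rw [weight_sum P hP1, one_mul]
    _ = ∑ d, ∑ a, ∑ s', (μ : D → ℝ) d * (ν : A → ℝ) a * P d a s s' * m := by
        simp [Finset.sum_mul]

include hP1 in
lemma payoff_shift (V : S → ℝ) (c : ℝ) (s : S) (μ : ↥(Mixed D)) (ν : ↥(Mixed A)) :
    payoff P (fun s' => V s' + c) s μ ν = payoff P V s μ ν + c := by
  unfold payoff
  have : ∀ d a s', (μ : D → ℝ) d * (ν : A → ℝ) a * P d a s s' * (V s' + c)
      = (μ : D → ℝ) d * (ν : A → ℝ) a * P d a s s' * V s'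
        + (μ : D → ℝ) d * (ν : A → ℝ) a * P d a s s' * c := fun d a s' => mul_add _ _ _
  simp only [this, Finset.sum_add_distrib]
  congr 1
  calc ∑ d, ∑ a, ∑ s', (μ : D → ℝ) d * (ν : A → ℝ) a * P d a s s' * c
      = (∑ d, ∑ a, ∑ s', (μ : D → ℝ) d * (ν : A → ℝ) a * P d a s s') * c := by
        simp [Finset.sum_mul]
    _ = c := by rw [weight_sum P hP1, one_mul]

include hP0 hP1 in
lemma payoff_bddBelow {V : S → ℝ} {m : ℝ} (h : ∀ s', m ≤ V s') (s : S) (μ : ↥(Mixed D)) :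
    BddBelow (Set.range fun ν : ↥(Mixed A) => payoff P V s μ ν) :=
  ⟨m, by rintro x ⟨ν, rfl⟩; exact le_payoff P hP0 hP1 h s μ ν⟩

include hP0 hP1 in
lemma inner_le {V : S → ℝ} {M : ℝ} (h : ∀ s', V s' ≤ M) (s : S) (μ : ↥(Mixed D)) :
    (⨅ ν : ↥(Mixed A), payoff P V s μ ν) ≤ M :=
  ciInf_le_of_le (payoff_bddBelow P hP0 hP1 (m := Finset.univ.inf' univ_nonempty V)
    (fun s' => Finset.inf'_le _ (Finset.mem_univ s')) s μ) (unif A)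
    (payoff_le P hP0 hP1 h s μ (unif A))

include hP0 hP1 in
lemma le_inner {V : S → ℝ} {m : ℝ} (h : ∀ s', m ≤ V s') (s : S) (μ : ↥(Mixed D)) :
    m ≤ ⨅ ν : ↥(Mixed A), payoff P V s μ ν :=
  le_ciInf fun ν => le_payoff P hP0 hP1 h s μ ν

include hP0 hP1 in
lemma bellmanT_le {V : S → ℝ} {M : ℝ} (h : ∀ s', V s' ≤ M) (s : S) :
    bellmanT P V s ≤ M := by
  rw [bellmanT_eq]
  exact ciSup_le fun μ => inner_le P hP0 hP1 h s μ

include hP0 hP1 in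
lemma outer_bddAbove {V : S → ℝ} {M : ℝ} (h : ∀ s', V s' ≤ M) (s : S) :
    BddAbove (Set.range fun μ : ↥(Mixed D) => ⨅ ν : ↥(Mixed A), payoff P V s μ ν) :=
  ⟨M, by rintro x ⟨μ, rfl⟩; exact inner_le P hP0 hP1 h s μ⟩

include hP0 hP1 in
lemma le_bellmanT {V : S → ℝ} {m : ℝ} (h : ∀ s', m ≤ V s') (s : S) :
    m ≤ bellmanT P V s := by
  rw [bellmanT_eq]
  exact le_ciSup_of_le (outer_bddAbove P hP0 hP1
    (M := Finset.univ.sup' univ_nonempty V) (fun s' => Finset.le_sup' _ (Finset.mem_univ s')) s)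
    (unif D) (le_inner P hP0 hP1 h s (unif D))

include hP0 hP1 in
lemma bellmanT_mono {V W : S → ℝ} (h : ∀ s', V s' ≤ W s') (s : S) :
    bellmanT P V s ≤ bellmanT P W s := by
  rw [bellmanT_eq, bellmanT_eq]
  refine ciSup_le fun μ => le_ciSup_of_le (outer_bddAbove P hP0 hP1
    (M := Finset.univ.sup' univ_nonempty W) (fun s' => Finset.le_sup' _ (Finset.mem_univ s')) s)
    μ (ciInf_mono (payoff_bddBelow P hP0 hP1 (m := Finset.univ.inf' univ_nonempty V)
      (fun s' => Finset.inf'_le _ (Finset.mem_univ s')) s μ)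
      (fun ν => payoff_mono P hP0 h s μ ν))

include hP0 hP1 in
lemma bellmanT_shift (V : S → ℝ) (c : ℝ) (s : S) :
    bellmanT P (fun s' => V s' + c) s = bellmanT P V s + c := by
  rw [bellmanT_eq, bellmanT_eq]
  have hBB : ∀ μ : ↥(Mixed D),
      BddBelow (Set.range fun ν : ↥(Mixed A) => payoff P V s μ ν) := fun μ =>
    payoff_bddBelow P hP0 hP1 (m := Finset.univ.inf' univ_nonempty V)
      (fun s' => Finset.inf'_le _ (Finset.mem_univ s')) s μ
  have h1 : ∀ μ : ↥(Mixed D), (⨅ ν : ↥(Mixed A), payoff P (fun s' => V s' + c) s μ ν)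
      = (⨅ ν : ↥(Mixed A), payoff P V s μ ν) + c := by
    intro μ
    calc (⨅ ν : ↥(Mixed A), payoff P (fun s' => V s' + c) s μ ν)
        = ⨅ ν : ↥(Mixed A), (payoff P V s μ ν + c) :=
          iInf_congr fun ν => payoff_shift P hP1 V c s μ ν
      _ = (⨅ ν : ↥(Mixed A), payoff P V s μ ν) + c := (ciInf_add (hBB μ) c).symm
  rw [iSup_congr h1]
  exact (ciSup_add (outer_bddAbove P hP0 hP1
    (M := Finset.univ.sup' univ_nonempty V)
    (fun s' => Finset.le_sup' _ (Finset.mem_univ s')) s) c).symm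

end BellmanAux

/-- The limit of monotone value iterates is a fixed point of the Bellman operator. -/
theorem bellman_iterates_limit_is_fixed_point
    {S D A : Type*} [Fintype S] [Nonempty S] [Fintype D] [Nonempty D]
    [Fintype A] [Nonempty A]
    (P : D → A → S → S → ℝ)
    (hP0 : ∀ d a s s', 0 ≤ P d a s s') (hP1 : ∀ d a s, ∑ s', P d a s s' = 1)
    (V0 : S → ℝ) (hV0 : ∀ s, 0 ≤ V0 s ∧ V0 s ≤ 1)
    (hmono : ∀ s, V0 s ≤ bellmanT P V0 s) :
    ∃ Vstar : S → ℝ, (∀ s, 0 ≤ Vstar s ∧ Vstar s ≤ 1) ∧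
      (∀ s, Filter.Tendsto (fun k => (bellmanT P)^[k] V0 s) Filter.atTop (nhds (Vstar s))) ∧
      bellmanT P Vstar = Vstar := by
  classical
  set W : ℕ → S → ℝ := fun k => (bellmanT P)^[k] V0 with hW
  have hWsucc : ∀ k, W (k + 1) = bellmanT P (W k) := fun k =>
    Function.iterate_succ_apply' (bellmanT P) k V0
  -- bounds 0 ≤ W k ≤ 1
  have hbdd : ∀ k s, 0 ≤ W k s ∧ W k s ≤ 1 := by
    intro k
    induction k with
    | zero => exact hV0
    | succ k ih =>
      intro s
      rw [hWsucc]
      exact ⟨BellmanAux.le_bellmanT P hP0 hP1 (fun s' => (ih s').1) s,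
        BellmanAux.bellmanT_le P hP0 hP1 (fun s' => (ih s').2) s⟩
  -- monotone in k
  have hmonoW : ∀ k s, W k s ≤ W (k + 1) s := by
    intro k
    induction k with
    | zero => intro s; rw [hWsucc]; exact hmono s
    | succ k ih =>
      intro s
      rw [hWsucc, hWsucc]
      exact BellmanAux.bellmanT_mono P hP0 hP1 ih s
  have hmonoW' : ∀ s, Monotone fun k => W k s := fun s =>
    monotone_nat_of_le_succ fun k => hmonoW k s
  have hbddA : ∀ s, BddAbove (Set.range fun k => W k s) := fun s =>
    ⟨1, by rintro x ⟨k, rfl⟩; exact (hbdd k s).2⟩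
  set Vs : S → ℝ := fun s => ⨆ k, W k s with hVs
  have htend : ∀ s, Filter.Tendsto (fun k => W k s) Filter.atTop (nhds (Vs s)) :=
    fun s => tendsto_atTop_ciSup (hmonoW' s) (hbddA s)
  have hle : ∀ k s, W k s ≤ Vs s := fun k s => le_ciSup (hbddA s) k
  have hVsb : ∀ s, 0 ≤ Vs s ∧ Vs s ≤ 1 := fun s =>
    ⟨le_trans (hbdd 0 s).1 (hle 0 s), ciSup_le fun k => (hbdd k s).2⟩
  refine ⟨Vs, hVsb, htend, ?_⟩
  -- Vs ≤ T Vs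
  have h1 : ∀ s, Vs s ≤ bellmanT P Vs s := by
    intro s
    refine ciSup_le fun k => le_trans (hmonoW k s) ?_
    rw [hWsucc]
    exact BellmanAux.bellmanT_mono P hP0 hP1 (fun s' => hle k s') s
  -- T Vs ≤ Vs
  have h2 : ∀ s, bellmanT P Vs s ≤ Vs s := by
    intro s
    set ε : ℕ → ℝ := fun k => ∑ s', (Vs s' - W k s') with hε
    have hεtend : Filter.Tendsto ε Filter.atTop (nhds 0) := by
      have : Filter.Tendsto ε Filter.atTop (nhds (∑ s' : S, (0 : ℝ))) := by
        refine tendsto_finset_sum _ fun s' _ => ?_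
        have := Filter.Tendsto.const_sub (Vs s') (htend s')
        simpa using this
      simpa using this
    have hkey : ∀ k, bellmanT P Vs s ≤ Vs s + ε k := by
      intro k
      have hpt : ∀ s', Vs s' ≤ W k s' + ε k := by
        intro s'
        have h0 : Vs s' - W k s' ≤ ε k :=
          Finset.single_le_sum (f := fun s' => Vs s' - W k s')
            (fun i _ => sub_nonneg.2 (hle k i)) (Finset.mem_univ s')
        linarith
      calc bellmanT P Vs s ≤ bellmanT P (fun s' => W k s' + ε k) s :=
            BellmanAux.bellmanT_mono P hP0 hP1 hpt s
        _ = bellmanT P (W k) s + ε k := BellmanAux.bellmanT_shift P hP0 hP1 (W k) (ε k) s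
        _ = W (k + 1) s + ε k := by rw [← hWsucc]
        _ ≤ Vs s + ε k := by linarith [hle (k + 1) s]
    have : Filter.Tendsto (fun k => Vs s + ε k) Filter.atTop (nhds (Vs s)) := by
      have h := hεtend.const_add (Vs s)
      rw [add_zero] at h
      exact h
    exact ge_of_tendsto' this hkey
  exact funext fun s => le_antisymm (h2 s) (h1 s)
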